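/- For any integer n ≥ 0, any coalition C, any pairwise disjoint coalitions D_1, …, D_n with D_i ⊆ C for all i, and any formulae φ, χ_1, …, χ_n ∈ Φ, one has {K̄_{D_i} B_{D_i} χ_i : 1 ≤ i ≤ n}, K_C(φ → χ_1 ∨ … ∨ χ_n) ⊢ K_C(φ → B_C φ) (where the empty disjunction is ⊥ and parentheses in disjunctions are nested to the left). -/

import Mathlib

/-- Formulae of the language Φ: propositional variables, negation, implication,
distributed knowledge `know C φ` (K_C φ) and blameworthiness `blame C φ` (B_C φ),
together with a primitive falsum used to define the constants ⊥ and ⊤. -/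
inductive Formula (A Prp : Type) : Type
  | var : Prp → Formula A Prp
  | bot : Formula A Prp
  | neg : Formula A Prp → Formula A Prp
  | imp : Formula A Prp → Formula A Prp → Formula A Prp
  | know : Set A → Formula A Prp → Formula A Prp
  | blame : Set A → Formula A Prp → Formula A Prp

namespace Formula

variable {A Prp : Type}

def top : Formula A Prp := neg bot
def or (φ ψ : Formula A Prp) : Formula A Prp := imp (neg φ) ψ
def and (φ ψ : Formula A Prp) : Formula A Prp := neg (imp φ (neg ψ))
def iff (φ ψ : Formula A Prp) : Formula A Prp := and (imp φ ψ) (imp ψ φ)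
/-- `K̄_C φ` is an abbreviation for `¬ K_C ¬ φ`. -/
def kbar (C : Set A) (φ : Formula A Prp) : Formula A Prp := neg (know C (neg φ))

end Formula

/-- Truth-table evaluation treating `var`, `know` and `blame` formulae as atoms. -/
def evalF {A Prp : Type} (v : Formula A Prp → Prop) : Formula A Prp → Prop
  | .var p => v (.var p)
  | .bot => False
  | .neg φ => ¬ evalF v φ
  | .imp φ ψ => evalF v φ → evalF v ψ
  | .know C φ => v (.know C φ)
  | .blame C φ => v (.blame C φ)

/-- Propositional tautologies of the language Φ. -/
def Tautology {A Prp : Type} (φ : Formula A Prp) : Prop := ∀ v, evalF v φ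

/-- Theorems of the logical system: ⊢ φ. -/
inductive Provable {A Prp : Type} : Formula A Prp → Prop
  | taut {φ} : Tautology φ → Provable φ
  | truthK {C φ} : Provable (.imp (.know C φ) φ)
  | truthB {C φ} : Provable (.imp (.blame C φ) φ)
  | distr {C φ ψ} : Provable (.imp (.know C (.imp φ ψ)) (.imp (.know C φ) (.know C ψ)))
  | negIntro {C φ} : Provable (.imp (.neg (.know C φ)) (.know C (.neg (.know C φ))))
  | monoK {C D φ} (h : C ⊆ D) : Provable (.imp (.know C φ) (.know D φ))
  | monoB {C D φ} (h : C ⊆ D) : Provable (.imp (.blame C φ) (.blame D φ))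
  | noneBlame {φ} : Provable (.neg (.blame (∅ : Set A) φ))
  | blameTop {C} : Provable (.neg (.blame C Formula.top))
  | jointResp {C D φ ψ} (h : Disjoint C D) :
      Provable (.imp (.and (.kbar C (.blame C φ)) (.kbar D (.blame D ψ)))
        (.imp (.or φ ψ) (.blame (C ∪ D) (.or φ ψ))))
  | knownCause {C φ ψ} :
      Provable (.imp (.know C (.imp φ ψ)) (.imp (.blame C ψ) (.imp φ (.blame C φ))))
  | fairness {C φ} : Provable (.imp (.blame C φ) (.know C (.imp φ (.blame C φ))))
  | mp {φ ψ} : Provable (.imp φ ψ) → Provable φ → Provable ψ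
  | nec {C φ} : Provable φ → Provable (.know C φ)

/-- Derivability from hypotheses X using only Modus Ponens: X ⊢ φ. -/
inductive ProvableFrom {A Prp : Type} (X : Set (Formula A Prp)) : Formula A Prp → Prop
  | thm {φ} : Provable φ → ProvableFrom X φ
  | hyp {φ} : φ ∈ X → ProvableFrom X φ
  | mp {φ ψ} : ProvableFrom X (.imp φ ψ) → ProvableFrom X φ → ProvableFrom X ψ

/-- A set of formulae is consistent if X ⊬ ⊥. -/
def Consistent {A Prp : Type} (X : Set (Formula A Prp)) : Prop :=
  ¬ ProvableFrom X Formula.bot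

/-- Disjunction of a list of formulae, with parentheses nested to the left and
the empty disjunction equal to ⊥. -/
def bigOr {A Prp : Type} : List (Formula A Prp) → Formula A Prp
  | [] => Formula.bot
  | χ :: rest => rest.foldl Formula.or χ

section Aux

namespace BlameAux

open Formula

variable {A Prp : Type}

lemma taut_mp1 {a b : Formula A Prp} (h : Provable a) (t : Tautology (a.imp b)) :
    Provable b := Provable.mp (Provable.taut t) h

lemma taut_mp2 {a b c : Formula A Prp} (h1 : Provable a) (h2 : Provable b)
    (t : Tautology (a.imp (b.imp c))) : Provable c :=
  Provable.mp (Provable.mp (Provable.taut t) h1) h2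

lemma taut_mp3 {a b c d : Formula A Prp} (h1 : Provable a) (h2 : Provable b) (h3 : Provable c)
    (t : Tautology (a.imp (b.imp (c.imp d)))) : Provable d :=
  Provable.mp (Provable.mp (Provable.mp (Provable.taut t) h1) h2) h3

lemma taut_mp4 {a b c d e : Formula A Prp} (h1 : Provable a) (h2 : Provable b) (h3 : Provable c)
    (h4 : Provable d) (t : Tautology (a.imp (b.imp (c.imp (d.imp e))))) : Provable e :=
  Provable.mp (Provable.mp (Provable.mp (Provable.mp (Provable.taut t) h1) h2) h3) h4

lemma taut_mp5 {a b c d e f : Formula A Prp} (h1 : Provable a) (h2 : Provable b) (h3 : Provable c)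
    (h4 : Provable d) (h5 : Provable e)
    (t : Tautology (a.imp (b.imp (c.imp (d.imp (e.imp f)))))) : Provable f :=
  Provable.mp (Provable.mp (Provable.mp (Provable.mp (Provable.mp (Provable.taut t) h1) h2) h3) h4) h5

lemma k_mp {G : Set A} {a b : Formula A Prp} (h : Provable (a.imp b)) :
    Provable ((know G a).imp (know G b)) :=
  Provable.mp Provable.distr (Provable.nec h)

lemma k_mp2 {G : Set A} {a b c : Formula A Prp} (h : Provable (a.imp (b.imp c))) :
    Provable ((know G a).imp ((know G b).imp (know G c))) := by
  have h1 : Provable ((know G a).imp (know G (b.imp c))) := k_mp h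
  have h2 : Provable ((know G (b.imp c)).imp ((know G b).imp (know G c))) := Provable.distr
  exact taut_mp2 h1 h2 (by intro v; simp [evalF]; tauto)

/-- K̄_D B_D χ → (χ → B_D χ). -/
lemma possBlame_imp (Dc : Set A) (χ : Formula A Prp) :
    Provable ((kbar Dc (blame Dc χ)).imp (χ.imp (blame Dc χ))) := by
  have f : Provable ((blame Dc χ).imp (know Dc (χ.imp (blame Dc χ)))) := Provable.fairness
  have d : Provable ((Formula.neg (know Dc (χ.imp (blame Dc χ)))).imp
      (Formula.neg (blame Dc χ))) := taut_mp1 f (by intro v; simp [evalF]; tauto)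
  have e := k_mp (G := Dc) d
  have ni : Provable ((Formula.neg (know Dc (χ.imp (blame Dc χ)))).imp
      (know Dc (Formula.neg (know Dc (χ.imp (blame Dc χ)))))) := Provable.negIntro
  have tk : Provable ((know Dc (χ.imp (blame Dc χ))).imp (χ.imp (blame Dc χ))) :=
    Provable.truthK
  exact taut_mp3 e ni tk (by intro v; simp [evalF, Formula.kbar]; tauto)

/-- K̄_D y → K_G K̄_D y  for D ⊆ G. -/
lemma kbar_known {Dc G : Set A} (h : Dc ⊆ G) (y : Formula A Prp) :
    Provable ((kbar Dc y).imp (know G (kbar Dc y))) := by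
  have ni : Provable ((kbar Dc y).imp (know Dc (kbar Dc y))) := Provable.negIntro
  have m : Provable ((know Dc (kbar Dc y)).imp (know G (kbar Dc y))) := Provable.monoK h
  exact taut_mp2 ni m (by intro v; simp [evalF, Formula.kbar]; tauto)

/-- Positive introspection plus monotonicity: K_C θ → K_G K_C θ for C ⊆ G. -/
lemma posIntro {Cc G : Set A} (h : Cc ⊆ G) (θ : Formula A Prp) :
    Provable ((know Cc θ).imp (know G (know Cc θ))) := by
  have b : Provable ((know Cc (Formula.neg (know Cc θ))).imp (Formula.neg (know Cc θ))) :=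
    Provable.truthK
  have a : Provable ((Formula.neg (know Cc (Formula.neg (know Cc θ)))).imp
      (know Cc (Formula.neg (know Cc (Formula.neg (know Cc θ)))))) := Provable.negIntro
  have c : Provable ((Formula.neg (know Cc θ)).imp (know Cc (Formula.neg (know Cc θ)))) :=
    Provable.negIntro
  have c' : Provable ((Formula.neg (know Cc (Formula.neg (know Cc θ)))).imp (know Cc θ)) :=
    taut_mp1 c (by intro v; simp [evalF]; tauto)
  have d := k_mp (G := Cc) c'
  have m : Provable ((know Cc (know Cc θ)).imp (know G (know Cc θ))) := Provable.monoK h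
  exact taut_mp4 b a d m (by intro v; simp [evalF]; tauto)

/-- K_G ¬ψ → (K̄_D B_D χ → (ψ ∨ χ → B_G (ψ ∨ χ))) for D ⊆ G. -/
lemma knownFalse_or {G Dc : Set A} (hDG : Dc ⊆ G) (ψ χ : Formula A Prp) :
    Provable ((know G (Formula.neg ψ)).imp ((kbar Dc (blame Dc χ)).imp
      ((Formula.or ψ χ).imp (blame G (Formula.or ψ χ))))) := by
  have g1 : Provable ((know G (Formula.neg ψ)).imp (know G ((Formula.or ψ χ).imp χ))) :=
    k_mp (Provable.taut (by intro v; simp [evalF, Formula.or]; tauto))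
  have g2 : Provable ((know G ((Formula.or ψ χ).imp χ)).imp ((blame G χ).imp
      ((Formula.or ψ χ).imp (blame G (Formula.or ψ χ))))) := Provable.knownCause
  have g3 := possBlame_imp Dc χ
  have g4 : Provable ((blame Dc χ).imp (blame G χ)) := Provable.monoB hDG
  have g5 : Provable ((know G (Formula.neg ψ)).imp (Formula.neg ψ)) := Provable.truthK
  exact taut_mp5 g1 g2 g3 g4 g5 (by intro v; simp [evalF, Formula.or, Formula.kbar]; tauto)

lemma PF_weaken {X Y : Set (Formula A Prp)} (h : X ⊆ Y) {φ : Formula A Prp}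
    (hp : ProvableFrom X φ) : ProvableFrom Y φ := by
  induction hp with
  | thm t => exact .thm t
  | hyp m => exact .hyp (h m)
  | mp _ _ ih1 ih2 => exact .mp ih1 ih2

lemma internalize {X : Set (Formula A Prp)} {G : Set A}
    (hX : ∀ ψ ∈ X, Provable (ψ.imp (know G ψ))) {φ : Formula A Prp}
    (hp : ProvableFrom X φ) : ProvableFrom X (know G φ) := by
  induction hp with
  | thm t => exact .thm (Provable.nec t)
  | @hyp ψ m => exact .mp (.thm (hX ψ m)) (.hyp m)
  | mp _ _ ih1 ih2 => exact .mp (.mp (.thm Provable.distr) ih1) ih2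

/-- The union of the coalitions of a list of (coalition, formula) pairs. -/
def UnionL (l : List (Set A × Formula A Prp)) : Set A :=
  l.foldl (fun s p => s ∪ p.1) ∅

/-- The hypothesis set {K̄_{D} B_{D} χ : (D, χ) ∈ l}. -/
def Hyps (l : List (Set A × Formula A Prp)) : Set (Formula A Prp) :=
  {f | ∃ p ∈ l, f = kbar p.1 (blame p.1 p.2)}

lemma subset_foldl {s : Set A} (l : List (Set A × Formula A Prp)) :
    s ⊆ l.foldl (fun s p => s ∪ p.1) s := by
  induction l generalizing s with
  | nil => simp
  | cons a l ih => exact subset_trans Set.subset_union_left (ih (s := s ∪ a.1))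

lemma mem_subset_foldl {s : Set A} {l : List (Set A × Formula A Prp)}
    {p : Set A × Formula A Prp} (hp : p ∈ l) :
    p.1 ⊆ l.foldl (fun s p => s ∪ p.1) s := by
  induction l generalizing s with
  | nil => simp at hp
  | cons a l ih =>
    rcases List.mem_cons.mp hp with rfl | hp
    · exact subset_trans Set.subset_union_right (subset_foldl l)
    · exact ih hp

lemma foldl_subset {s C : Set A} {l : List (Set A × Formula A Prp)} (hs : s ⊆ C)
    (h : ∀ p ∈ l, p.1 ⊆ C) : l.foldl (fun s p => s ∪ p.1) s ⊆ C := by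
  induction l generalizing s with
  | nil => exact hs
  | cons a l ih =>
    exact ih (Set.union_subset hs (h a List.mem_cons_self))
      (fun p hp => h p (List.mem_cons_of_mem a hp))

lemma foldl_disjoint {s d : Set A} {l : List (Set A × Formula A Prp)} (hs : Disjoint s d)
    (h : ∀ p ∈ l, Disjoint p.1 d) : Disjoint (l.foldl (fun s p => s ∪ p.1) s) d := by
  induction l generalizing s with
  | nil => exact hs
  | cons a l ih =>
    exact ih (Disjoint.union_left hs (h a List.mem_cons_self))
      (fun p hp => h p (List.mem_cons_of_mem a hp))

lemma UnionL_append (l : List (Set A × Formula A Prp)) (d : Set A × Formula A Prp) :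
    UnionL (l ++ [d]) = UnionL l ∪ d.1 := by
  simp [UnionL, List.foldl_append]

lemma bigOr_concat (x : Formula A Prp) (xs : List (Formula A Prp)) (y : Formula A Prp) :
    bigOr ((x :: xs) ++ [y]) = Formula.or (bigOr (x :: xs)) y := by
  simp [bigOr, List.foldl_append]

set_option maxHeartbeats 1000000 in
/-- Main auxiliary lemma: from the hypotheses K̄_{Dᵢ} B_{Dᵢ} χᵢ for pairwise disjoint Dᵢ
one can derive (χ₁ ∨ … ∨ χₙ) → B_{D₁∪…∪Dₙ}(χ₁ ∨ … ∨ χₙ). -/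
theorem aux (l : List (Set A × Formula A Prp))
    (hpw : l.Pairwise (fun p q => Disjoint p.1 q.1)) :
    ProvableFrom (Hyps l)
      ((bigOr (l.map Prod.snd)).imp (blame (UnionL l) (bigOr (l.map Prod.snd)))) := by
  induction l using List.reverseRecOn with
  | nil =>
    exact .thm (Provable.taut (by intro v; simp [evalF, bigOr]))
  | append_singleton l d ih =>
    rw [List.pairwise_append] at hpw
    obtain ⟨hpw1, -, hpw3⟩ := hpw
    have hmem : kbar d.1 (blame d.1 d.2) ∈ Hyps (l ++ [d]) := ⟨d, by simp, rfl⟩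
    cases l with
    | nil =>
      have e1 : UnionL ([] ++ [d]) = d.1 := by simp [UnionL]
      rw [e1]
      show ProvableFrom _ ((bigOr [d.2]).imp (blame d.1 (bigOr [d.2])))
      exact .mp (.thm (possBlame_imp d.1 d.2)) (.hyp hmem)
    | cons c rest =>
      have hdisj : Disjoint (UnionL (c :: rest)) d.1 :=
        foldl_disjoint (Set.disjoint_left.mpr (by simp))
          (fun p hp => hpw3 p hp d (List.mem_singleton_self d))
      set ψ := bigOr ((c :: rest).map Prod.snd) with hψ
      set E := UnionL (c :: rest) with hE
      have hb : bigOr (((c :: rest) ++ [d]).map Prod.snd) = Formula.or ψ d.2 := by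
        rw [hψ]
        rw [show ((c :: rest) ++ [d]).map Prod.snd
            = (c.2 :: rest.map Prod.snd) ++ [d.2] by simp]
        exact bigOr_concat c.2 (rest.map Prod.snd) d.2
      have hU : UnionL ((c :: rest) ++ [d]) = E ∪ d.1 := UnionL_append _ _
      rw [hb, hU]
      -- internalized induction hypothesis
      have ihp := ih hpw1
      have hKcond : ∀ f ∈ Hyps (c :: rest), Provable (f.imp (know E f)) := by
        rintro f ⟨p, hp, rfl⟩
        exact kbar_known (mem_subset_foldl hp) _
      have ihk := internalize hKcond ihp
      have wsub : Hyps (c :: rest) ⊆ Hyps ((c :: rest) ++ [d]) := by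
        rintro f ⟨p, hp, rfl⟩
        exact ⟨p, List.mem_append_left _ hp, rfl⟩
      have f1 : ProvableFrom (Hyps ((c :: rest) ++ [d]))
          (know E (ψ.imp (blame E ψ))) := PF_weaken wsub ihk
      have f2 : ProvableFrom (Hyps ((c :: rest) ++ [d])) (kbar d.1 (blame d.1 d.2)) :=
        .hyp hmem
      -- joint responsibility instance
      have J := Provable.jointResp (C := E) (D := d.1) (φ := ψ) (ψ := d.2) hdisj
      -- from K_E(ψ → B_E ψ) and K_E ¬B_E ψ infer K_{E∪d.1} ¬ψ
      have t1a : Provable ((know E (ψ.imp (blame E ψ))).imp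
          ((know E (Formula.neg (blame E ψ))).imp (know E (Formula.neg ψ)))) :=
        k_mp2 (Provable.taut (by intro v; simp [evalF]; tauto))
      have t1b : Provable ((know E (Formula.neg ψ)).imp
          (know (E ∪ d.1) (Formula.neg ψ))) := Provable.monoK Set.subset_union_left
      have L3i := knownFalse_or (G := E ∪ d.1) (Dc := d.1) Set.subset_union_right ψ d.2
      have T : Provable ((know E (ψ.imp (blame E ψ))).imp ((kbar d.1 (blame d.1 d.2)).imp
          ((Formula.or ψ d.2).imp (blame (E ∪ d.1) (Formula.or ψ d.2))))) := by
        refine taut_mp4 J t1a t1b L3i ?_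
        intro v; simp [evalF, Formula.or, Formula.and, Formula.kbar]; tauto
      exact .mp (.mp (.thm T) f1) f2

end BlameAux

end Aux

/-- {K̄_{Dᵢ} B_{Dᵢ} χᵢ : 1 ≤ i ≤ n}, K_C(φ → χ₁ ∨ … ∨ χₙ) ⊢ K_C(φ → B_C φ),
for pairwise disjoint D₁, …, Dₙ ⊆ C. -/
theorem five_plus_plus {A Prp : Type} (n : ℕ) (C : Set A) (D : Fin n → Set A)
    (hDC : ∀ i, D i ⊆ C) (hD : ∀ i j, i ≠ j → Disjoint (D i) (D j))
    (φ : Formula A Prp) (χ : Fin n → Formula A Prp) :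
    ProvableFrom
      (insert (Formula.know C (Formula.imp φ (bigOr (List.ofFn χ))))
        (Set.range fun i => Formula.kbar (D i) (Formula.blame (D i) (χ i))))
      (Formula.know C (Formula.imp φ (Formula.blame C φ))) := by
  classical
  open Formula BlameAux in
  set ψb := bigOr (List.ofFn χ) with hψb
  set X : Set (Formula A Prp) :=
    insert (Formula.know C (Formula.imp φ ψb))
      (Set.range fun i => Formula.kbar (D i) (Formula.blame (D i) (χ i))) with hX
  set l : List (Set A × Formula A Prp) := List.ofFn (fun i => (D i, χ i)) with hl
  have hpw : l.Pairwise (fun p q => Disjoint p.1 q.1) := by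
    rw [hl, List.pairwise_ofFn]
    intro i j hij
    exact hD i j (ne_of_lt hij)
  have haux := aux l hpw
  have hmap : l.map Prod.snd = List.ofFn χ := by
    rw [hl, List.map_ofFn]
    rfl
  rw [hmap] at haux
  have hmemC : ∀ p ∈ l, p.1 ⊆ C := by
    intro p hp
    rw [hl] at hp
    rw [List.mem_ofFn] at hp
    obtain ⟨i, rfl⟩ := hp
    exact hDC i
  have hEC : UnionL l ⊆ C := foldl_subset (Set.empty_subset C) hmemC
  have hsub : Hyps l ⊆ X := by
    rintro f ⟨p, hp, rfl⟩
    rw [hl] at hp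
    rw [List.mem_ofFn] at hp
    obtain ⟨i, rfl⟩ := hp
    exact Set.mem_insert_iff.mpr (Or.inr ⟨i, rfl⟩)
  have h1 : ProvableFrom X (ψb.imp (Formula.blame (UnionL l) ψb)) :=
    PF_weaken hsub haux
  have hmono : Provable ((ψb.imp (Formula.blame (UnionL l) ψb)).imp
      (ψb.imp (Formula.blame C ψb))) :=
    taut_mp1 (Provable.monoB (φ := ψb) hEC) (by intro v; simp [evalF]; tauto)
  have h2 : ProvableFrom X (ψb.imp (Formula.blame C ψb)) := .mp (.thm hmono) h1
  have hk : ProvableFrom X (Formula.know C (φ.imp ψb)) := .hyp (Set.mem_insert _ _)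
  have T2 : Provable ((Formula.know C (φ.imp ψb)).imp
      ((ψb.imp (Formula.blame C ψb)).imp (φ.imp (Formula.blame C φ)))) := by
    have tk : Provable ((Formula.know C (φ.imp ψb)).imp (φ.imp ψb)) := Provable.truthK
    have kc : Provable ((Formula.know C (φ.imp ψb)).imp
        ((Formula.blame C ψb).imp (φ.imp (Formula.blame C φ)))) := Provable.knownCause
    exact taut_mp2 tk kc (by intro v; simp [evalF]; tauto)
  have h3 : ProvableFrom X (φ.imp (Formula.blame C φ)) := .mp (.mp (.thm T2) hk) h2
  have cond : ∀ f ∈ X, Provable (f.imp (Formula.know C f)) := by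
    intro f hf
    rcases Set.mem_insert_iff.mp hf with rfl | ⟨i, rfl⟩
    · exact posIntro (subset_refl C) _
    · exact kbar_known (hDC i) _
  exact internalize cond h3
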